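/- Fix β ∈ (1,2) and a threshold sequence u = (u_n)_{n≥1} with each u_n ∈ [1,(β−1)⁻¹]. Then for Lebesgue-almost every x ∈ [0,1], k(m,u,x) is finite for all sufficiently large m and lim_{m→∞} k(m,u,x)/m = log 2/log β. -/

import Mathlib

open MeasureTheory Filter Set Real

/-- Orbit of the β-encoder: `betaIter β u x n` is the iterate `x_n`, where
`x_0 = x` and `x_n = T_{u_n}(x_{n-1})`. -/
noncomputable def betaIter (β : ℝ) (u : ℕ → ℝ) (x : ℝ) : ℕ → ℝ
  | 0 => x
  | n + 1 =>
      if β * betaIter β u x n < u (n + 1) then β * betaIter β u x n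
      else β * betaIter β u x n - 1

/-- The bit `b_n` produced by the β-encoder at step `n ≥ 1`. -/
noncomputable def betaBit (β : ℝ) (u : ℕ → ℝ) (x : ℝ) (n : ℕ) : ℝ :=
  if β * betaIter β u x (n - 1) < u n then 0 else 1

/-- The interval `I_k(u,x)` determined by the first `k` output bits. -/
noncomputable def betaI (β : ℝ) (u : ℕ → ℝ) (x : ℝ) (k : ℕ) : Set ℝ :=
  Set.Icc (∑ n ∈ Finset.Icc 1 k, betaBit β u x n / β ^ n)
    ((∑ n ∈ Finset.Icc 1 k, betaBit β u x n / β ^ n) + (β ^ k)⁻¹ * (β - 1)⁻¹)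

/-- The dyadic interval of order `m` containing `x`: `[j/2^m, (j+1)/2^m)`,
the last one (containing 1) being `[1 - 2^{-m}, 1]`. -/
noncomputable def dyadic (m : ℕ) (x : ℝ) : Set ℝ :=
  if 1 - ((2:ℝ) ^ m)⁻¹ ≤ x then Set.Icc (1 - ((2:ℝ) ^ m)⁻¹) 1
  else Set.Ico ((⌊x * 2 ^ m⌋ : ℝ) / 2 ^ m) (((⌊x * 2 ^ m⌋ : ℝ) + 1) / 2 ^ m)

/-- `k(m, u, x) = inf { k ≥ 1 : I_k(u,x) ⊆ D_m(x) } ∈ ℕ ∪ {∞}`. -/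
noncomputable def kval (β : ℝ) (u : ℕ → ℝ) (x : ℝ) (m : ℕ) : ℕ∞ :=
  sInf {e : ℕ∞ | ∃ k : ℕ, e = (k : ℕ∞) ∧ 1 ≤ k ∧ betaI β u x k ⊆ dyadic m x}

section aux
variable {β : ℝ} {u : ℕ → ℝ} {x : ℝ}

lemma betaIter_mem (hβ1 : 1 < β) (hβ2 : β < 2)
    (hu : ∀ n, 1 ≤ n → u n ∈ Set.Icc (1:ℝ) (β - 1)⁻¹)
    (hx : x ∈ Set.Icc (0:ℝ) (β-1)⁻¹) :
    ∀ n, betaIter β u x n ∈ Set.Icc (0:ℝ) (β-1)⁻¹ := by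
  intro n
  induction n with
  | zero => exact hx
  | succ n ih =>
    have hb0 : (0:ℝ) < β := by linarith
    have hb1 : (0:ℝ) < β - 1 := by linarith
    obtain ⟨h1, h2⟩ := ih
    obtain ⟨hu1, hu2⟩ := hu (n+1) (by omega)
    have hβinv : β * (β-1)⁻¹ = (β-1)⁻¹ + 1 := by field_simp; ring
    simp only [betaIter]
    split_ifs with h
    · exact ⟨by positivity, le_trans h.le hu2⟩
    · push_neg at h
      refine ⟨by linarith [le_trans hu1 h], ?_⟩
      have : β * betaIter β u x n ≤ β * (β-1)⁻¹ := by nlinarith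
      linarith

lemma betaSum_add (hβ0 : 0 < β) :
    ∀ k, (∑ n ∈ Finset.Icc 1 k, betaBit β u x n / β ^ n)
        + (β ^ k)⁻¹ * betaIter β u x k = x := by
  intro k
  induction k with
  | zero => simp [betaIter]
  | succ k ih =>
    rw [Finset.sum_Icc_succ_top (by omega)]
    have hbk : (β:ℝ)^k ≠ 0 := by positivity
    have hbk1 : (β:ℝ)^(k+1) ≠ 0 := by positivity
    set S := ∑ n ∈ Finset.Icc 1 k, betaBit β u x n / β ^ n with hS
    set y := betaIter β u x k with hy
    have hbit : betaBit β u x (k+1) = if β * y < u (k+1) then 0 else 1 := by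
      simp [betaBit, hy]
    have hit : betaIter β u x (k+1) = if β * y < u (k+1) then β * y else β * y - 1 := rfl
    rw [hbit, hit]
    split_ifs with h
    · have e : (β^(k+1))⁻¹ * (β*y) = (β^k)⁻¹ * y := by
        field_simp; ring
      rw [zero_div]; linarith [ih]
    · have e : (1:ℝ)/β^(k+1) + (β^(k+1))⁻¹ * (β*y - 1) = (β^k)⁻¹ * y := by
        field_simp; ring
      linarith [ih]

lemma mem_betaI (hβ1 : 1 < β) (hβ2 : β < 2)
    (hu : ∀ n, 1 ≤ n → u n ∈ Set.Icc (1:ℝ) (β - 1)⁻¹)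
    (hx : x ∈ Set.Icc (0:ℝ) (β-1)⁻¹) (k : ℕ) : x ∈ betaI β u x k := by
  have h := betaSum_add (u := u) (x := x) (by linarith) k
  obtain ⟨h1, h2⟩ := betaIter_mem hβ1 hβ2 hu hx k
  have hbk : (0:ℝ) < (β^k)⁻¹ := by positivity
  constructor
  · nlinarith
  · nlinarith

lemma dyadic_subset (m : ℕ) (x : ℝ) :
    ∃ t : ℝ, dyadic m x ⊆ Set.Icc t (t + ((2:ℝ)^m)⁻¹) := by
  unfold dyadic
  split_ifs with h
  · exact ⟨1 - ((2:ℝ)^m)⁻¹, fun y hy => ⟨hy.1, by linarith [hy.2]⟩⟩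
  · refine ⟨(⌊x * 2^m⌋ : ℝ)/2^m, fun y hy => ⟨hy.1, ?_⟩⟩
    have h2m : ((2:ℝ)^m) ≠ 0 := by positivity
    have e : ((⌊x * 2^m⌋ : ℝ)+1)/2^m = (⌊x*2^m⌋ : ℝ)/2^m + ((2:ℝ)^m)⁻¹ := by
      field_simp
    linarith [hy.2, e ▸ hy.2]


lemma kval_lower (hβ1 : 1 < β) (hβ2 : β < 2) (m k : ℕ)
    (hsub : betaI β u x k ⊆ dyadic m x) :
    (m : ℝ) * (Real.log 2 / Real.log β) ≤ k := by
  obtain ⟨t, ht⟩ := dyadic_subset m x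
  set S := ∑ n ∈ Finset.Icc 1 k, betaBit β u x n / β ^ n with hS
  have hℓ : (0:ℝ) ≤ (β^k)⁻¹ * (β-1)⁻¹ := by
    have : (0:ℝ) < β := by linarith
    have : (0:ℝ) < β - 1 := by linarith
    positivity
  have h1 := ht (hsub (show S ∈ betaI β u x k from ⟨le_refl _, by linarith⟩))
  have h2 := ht (hsub (show S + (β^k)⁻¹ * (β-1)⁻¹ ∈ betaI β u x k from
    ⟨by linarith, le_refl _⟩))
  have hw : (β^k)⁻¹ * (β-1)⁻¹ ≤ ((2:ℝ)^m)⁻¹ := by linarith [h1.1, h2.2]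
  have hbk : (0:ℝ) < β^k := by positivity
  have h2m : (0:ℝ) < (2:ℝ)^m := by positivity
  have hb1 : (0:ℝ) < β - 1 := by linarith
  have hP : (0:ℝ) < β^k * (β-1) := by positivity
  have key : (2:ℝ)^m ≤ β^k := by
    rw [← mul_inv] at hw
    have h3 : (2:ℝ)^m ≤ β^k * (β-1) := (inv_le_inv₀ hP h2m).1 hw
    nlinarith
  have hlogβ : 0 < Real.log β := Real.log_pos hβ1
  have hlog : (m:ℝ) * Real.log 2 ≤ (k:ℝ) * Real.log β := by
    have h4 : Real.log ((2:ℝ)^m) ≤ Real.log (β^k) :=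
      (Real.log_le_log_iff (by positivity) (by positivity)).2 key
    rwa [Real.log_pow, Real.log_pow] at h4
  have e : (m:ℝ) * (Real.log 2 / Real.log β) = ((m:ℝ) * Real.log 2) / Real.log β := by ring
  rw [e, div_le_iff₀ hlogβ]
  linarith

lemma subset_dyadic {m : ℕ} {δ c ℓ : ℝ}
    (hx0 : 0 ≤ x) (hx1 : x ≤ 1)
    (hj : ∀ i : ℕ, i ≤ 2^m → δ ≤ |x - (i:ℝ)/2^m|)
    (hc1 : c ≤ x) (hc2 : x ≤ c + ℓ) (hℓ0 : 0 ≤ ℓ) (hℓδ : ℓ < δ) :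
    Set.Icc c (c + ℓ) ⊆ dyadic m x := by
  have h2m : (0:ℝ) < (2:ℝ)^m := by positivity
  unfold dyadic
  split_ifs with h
  · have e1 : (((2:ℕ)^m : ℕ):ℝ)/2^m = 1 := by push_cast; field_simp
    have h1 := hj (2^m) le_rfl
    rw [e1] at h1
    rw [abs_of_nonpos (by linarith)] at h1
    have e2 : (((2^m - 1:ℕ)):ℝ)/2^m = 1 - ((2:ℝ)^m)⁻¹ := by
      have h1' : (1:ℕ) ≤ 2^m := Nat.one_le_two_pow
      push_cast [h1']
      field_simp
    have h2 := hj (2^m - 1) (Nat.sub_le _ _)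
    rw [e2, abs_of_nonneg (by linarith)] at h2
    intro y hy
    exact ⟨by linarith [hy.1], by linarith [hy.2]⟩
  · push_neg at h
    set j0 : ℤ := ⌊x * 2^m⌋ with hj0
    have hj0n : 0 ≤ j0 := Int.floor_nonneg.2 (by positivity)
    have hfl : (j0:ℝ) ≤ x * 2^m := Int.floor_le _
    have hfu : x * 2^m < (j0:ℝ) + 1 := Int.lt_floor_add_one _
    have hup : (j0:ℝ) + 1 ≤ 2^m := by
      have : x * 2^m < ((2:ℝ)^m) - 1 := by
        have := mul_lt_mul_of_pos_right h h2m
        rw [sub_mul, one_mul, inv_mul_cancel₀ (ne_of_gt h2m)] at this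
        linarith
      have hlt : (j0:ℝ) < (2:ℝ)^m - 1 := lt_of_le_of_lt hfl this
      have : (j0:ℤ) < 2^m - 1 := by exact_mod_cast (by push_cast; linarith : (j0:ℝ) < ((2^m - 1 : ℤ):ℝ))
      have : (j0:ℤ) + 1 ≤ 2^m - 1 := by omega
      calc (j0:ℝ) + 1 ≤ ((2^m - 1 : ℤ):ℝ) := by exact_mod_cast this
        _ ≤ 2^m := by push_cast; linarith
    set i : ℕ := j0.toNat with hi
    have hic : ((i:ℤ):ℝ) = (j0:ℝ) := by
      rw [hi, Int.toNat_of_nonneg hj0n]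
    have hicast : (i:ℝ) = (j0:ℝ) := by exact_mod_cast hic
    have hile : i ≤ 2^m := by
      have : (i:ℝ) ≤ ((2^m:ℕ):ℝ) := by rw [hicast]; push_cast; linarith
      exact_mod_cast this
    have hile1 : i + 1 ≤ 2^m := by
      have : ((i:ℝ)) + 1 ≤ ((2^m:ℕ):ℝ) := by rw [hicast]; push_cast; linarith
      exact_mod_cast this
    have ha1 : (j0:ℝ)/2^m ≤ x := by
      rw [div_le_iff₀ h2m]; linarith
    have ha2 : x < ((j0:ℝ)+1)/2^m := by
      rw [lt_div_iff₀ h2m]; linarith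
    have hd1 := hj i hile
    rw [hicast, abs_of_nonneg (by linarith)] at hd1
    have hd2 := hj (i+1) hile1
    have e3 : ((i+1:ℕ):ℝ)/2^m = ((j0:ℝ)+1)/2^m := by push_cast; rw [hicast]
    rw [e3, abs_of_nonpos (by linarith)] at hd2
    intro y hy
    exact ⟨by linarith [hy.1], by linarith [hy.2]⟩


end aux

noncomputable def badSet (θ : ℝ) (m : ℕ) : Set ℝ :=
  ⋃ i ∈ Finset.range (2^m + 1), Metric.ball ((i:ℝ)/2^m) (((2:ℝ)^m)⁻¹ * θ^m)

lemma bad_measure {θ : ℝ} (hθ0 : 0 ≤ θ) (m : ℕ) :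
    volume (badSet θ m) ≤ ENNReal.ofReal (4 * θ^m) := by
  have h2m : (0:ℝ) < (2:ℝ)^m := by positivity
  calc volume (badSet θ m)
      ≤ ∑ i ∈ Finset.range (2^m+1),
          volume (Metric.ball ((i:ℝ)/2^m) (((2:ℝ)^m)⁻¹ * θ^m)) :=
        measure_biUnion_finset_le _ _
    _ = ∑ _i ∈ Finset.range (2^m+1), ENNReal.ofReal (2 * (((2:ℝ)^m)⁻¹ * θ^m)) := by
        simp [Real.volume_ball]
    _ = ((2^m+1 : ℕ) : ENNReal) * ENNReal.ofReal (2 * (((2:ℝ)^m)⁻¹ * θ^m)) := by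
        rw [Finset.sum_const, Finset.card_range, nsmul_eq_mul]
    _ ≤ ENNReal.ofReal (4 * θ^m) := by
        rw [← ENNReal.ofReal_natCast, ← ENNReal.ofReal_mul (by positivity)]
        apply ENNReal.ofReal_le_ofReal
        have hc : ((2^m+1 : ℕ) : ℝ) = (2:ℝ)^m + 1 := by push_cast; ring
        rw [hc]
        have e : ((2:ℝ)^m + 1) * (2 * (((2:ℝ)^m)⁻¹ * θ^m))
            = (2 + 2 * ((2:ℝ)^m)⁻¹) * θ^m := by
          field_simp
        rw [e]
        have h1 : ((2:ℝ)^m)⁻¹ ≤ 1 := by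
          rw [inv_le_one_iff₀]; right; exact one_le_pow₀ (by norm_num)
        nlinarith [pow_nonneg hθ0 m]

lemma bad_tsum {θ : ℝ} (hθ0 : 0 < θ) (hθ1 : θ < 1) :
    (∑' m, volume (badSet θ m)) ≠ ⊤ := by
  have hsum : Summable (fun m : ℕ => 4 * θ^m) :=
    (summable_geometric_of_lt_one hθ0.le hθ1).mul_left 4
  have heq := ENNReal.ofReal_tsum_of_nonneg (fun m => by positivity : ∀ m : ℕ, 0 ≤ 4 * θ^m) hsum
  refine ne_top_of_le_ne_top ?_ (ENNReal.tsum_le_tsum (fun m => bad_measure hθ0.le m))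
  rw [← heq]
  exact ENNReal.ofReal_ne_top

section aux2
variable {β : ℝ} {u : ℕ → ℝ} {x : ℝ}

lemma kval_le_of_good (hβ1 : 1 < β) (hβ2 : β < 2)
    (hu : ∀ n, 1 ≤ n → u n ∈ Set.Icc (1:ℝ) (β - 1)⁻¹)
    (hx0 : 0 ≤ x) (hx1 : x ≤ 1) {θ : ℝ} (hθ0 : 0 < θ) (hθ1 : θ < 1)
    (m : ℕ) (hgood : x ∉ badSet θ m) :
    kval β u x m ≤
      ((⌈((m:ℝ) * (Real.log 2 - Real.log θ) - Real.log (β-1)) / Real.log β⌉₊ + 1 : ℕ) : ℕ∞) := by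
  have hb1 : (0:ℝ) < β - 1 := by linarith
  have hb1' : β - 1 < 1 := by linarith
  have hβ0 : (0:ℝ) < β := by linarith
  have hlogβ : 0 < Real.log β := Real.log_pos hβ1
  set A : ℝ := ((m:ℝ) * (Real.log 2 - Real.log θ) - Real.log (β-1)) / Real.log β with hA
  set k : ℕ := ⌈A⌉₊ + 1 with hk
  have hk1 : 1 ≤ k := by omega
  have hAk : A < (k:ℝ) := by
    have := Nat.le_ceil A
    push_cast [hk]
    linarith
  have h2m : (0:ℝ) < (2:ℝ)^m := by positivity
  have hbk : (0:ℝ) < β^k := by positivity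
  have hP : (0:ℝ) < β^k * (β-1) := by positivity
  have hθm : (0:ℝ) < θ^m := by positivity
  have hlog : Real.log ((2:ℝ)^m) < Real.log (β^k * (β-1) * θ^m) := by
    rw [Real.log_mul (by positivity) (by positivity),
      Real.log_mul (by positivity) (by positivity),
      Real.log_pow, Real.log_pow, Real.log_pow]
    have hAβ : A * Real.log β = (m:ℝ) * (Real.log 2 - Real.log θ) - Real.log (β-1) := by
      rw [hA, div_mul_cancel₀ _ (ne_of_gt hlogβ)]
    have := mul_lt_mul_of_pos_right hAk hlogβ
    rw [hAβ] at this
    linarith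
  have hlt : (2:ℝ)^m < β^k * (β-1) * θ^m := by
    have h := Real.exp_lt_exp.2 hlog
    rwa [Real.exp_log (by positivity), Real.exp_log (by positivity)] at h
  have hℓδ : (β^k)⁻¹ * (β-1)⁻¹ < ((2:ℝ)^m)⁻¹ * θ^m := by
    rw [← mul_inv]
    have h2 : (1:ℝ) < (((2:ℝ)^m)⁻¹ * θ^m) * (β^k * (β-1)) := by
      have h3 := mul_lt_mul_of_pos_left hlt (inv_pos.2 h2m)
      rw [inv_mul_cancel₀ (ne_of_gt h2m)] at h3
      calc (1:ℝ) < ((2:ℝ)^m)⁻¹ * (β^k * (β-1) * θ^m) := h3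
        _ = (((2:ℝ)^m)⁻¹ * θ^m) * (β^k * (β-1)) := by ring
    nlinarith [mul_inv_cancel₀ (ne_of_gt hP), inv_pos.2 hP]
  have hgood' : ∀ i : ℕ, i ≤ 2^m → ((2:ℝ)^m)⁻¹ * θ^m ≤ |x - (i:ℝ)/2^m| := by
    intro i hi
    by_contra hlt'
    push_neg at hlt'
    apply hgood
    refine Set.mem_biUnion (Finset.mem_range.2 (Nat.lt_succ_of_le hi)) ?_
    rw [Metric.mem_ball, Real.dist_eq]
    exact hlt'
  have hxm : x ∈ Set.Icc (0:ℝ) (β-1)⁻¹ :=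
    ⟨hx0, le_trans hx1 (le_of_lt ((one_lt_inv₀ hb1).2 hb1'))⟩
  have hxI := mem_betaI hβ1 hβ2 hu hxm k
  have hsub : betaI β u x k ⊆ dyadic m x :=
    subset_dyadic hx0 hx1 hgood' hxI.1 hxI.2 (by positivity) hℓδ
  exact sInf_le ⟨k, rfl, hk1, hsub⟩

lemma le_kval (hβ1 : 1 < β) (hβ2 : β < 2) (m : ℕ) :
    ((⌈(m:ℝ) * (Real.log 2 / Real.log β)⌉₊ : ℕ) : ℕ∞) ≤ kval β u x m := by
  apply le_sInf
  rintro e ⟨k, rfl, hk1, hsub⟩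
  rw [Nat.cast_le]
  exact Nat.ceil_le.2 (kval_lower hβ1 hβ2 m k hsub)

end aux2


/-- for Lebesgue-a.e. `x ∈ [0,1]`, `k(m,u,x)` is finite for all sufficiently
large `m` and `k(m,u,x)/m → log 2/log β` as `m → ∞`. -/
theorem stmt_3 (β : ℝ) (hβ : β ∈ Set.Ioo (1:ℝ) 2) (u : ℕ → ℝ)
    (hu : ∀ n, 1 ≤ n → u n ∈ Set.Icc (1:ℝ) (β - 1)⁻¹) :
    ∀ᵐ x ∂(volume.restrict (Set.Icc (0:ℝ) 1)),
      (∃ M : ℕ, ∀ m ≥ M, kval β u x m ≠ ⊤) ∧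
      Filter.Tendsto (fun m : ℕ => ((kval β u x m).toNat : ℝ) / (m : ℝ))
        Filter.atTop (nhds (Real.log 2 / Real.log β)) := by
  obtain ⟨hβ1, hβ2⟩ := hβ
  have hlogβ : 0 < Real.log β := Real.log_pos hβ1
  have hb1 : (0:ℝ) < β - 1 := by linarith
  have hb1' : β - 1 < 1 := by linarith
  set L : ℝ := Real.log 2 / Real.log β with hL
  set θ : ℕ → ℝ := fun j => Real.exp (-(Real.log β) / ((j:ℝ)+1)) with hθ
  have hθ0 : ∀ j, 0 < θ j := fun j => Real.exp_pos _
  have hθ1 : ∀ j, θ j < 1 := by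
    intro j
    rw [hθ]
    refine Real.exp_lt_one_iff.2 ?_
    have : (0:ℝ) < (j:ℝ) + 1 := by positivity
    exact div_neg_of_neg_of_pos (by linarith) this
  have hlogθ : ∀ j, Real.log (θ j) = -(Real.log β)/((j:ℝ)+1) := fun j => Real.log_exp _
  set C : ℝ := (-Real.log (β-1))/Real.log β + 2 with hC
  have hlb : Real.log (β-1) < 0 := Real.log_neg hb1 hb1'
  have hC0 : 0 < C := by
    rw [hC]
    have : 0 < (-Real.log (β-1))/Real.log β := div_pos (by linarith) hlogβ
    linarith
  have hG : ∀ᵐ x ∂(volume : Measure ℝ), ∀ j : ℕ, ∀ᶠ m in atTop, x ∉ badSet (θ j) m :=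
    ae_all_iff.2 fun j => ae_eventually_notMem (bad_tsum (hθ0 j) (hθ1 j))
  rw [ae_restrict_iff' measurableSet_Icc]
  filter_upwards [hG] with x hx hxI
  obtain ⟨hx0, hx1⟩ := hxI
  have hupper : ∀ j : ℕ, ∀ᶠ m in atTop, kval β u x m ≠ ⊤ ∧
      ((kval β u x m).toNat : ℝ) ≤ (m:ℝ)*L + (m:ℝ)/((j:ℝ)+1) + C := by
    intro j
    filter_upwards [hx j] with m hm
    have hle := kval_le_of_good hβ1 hβ2 hu hx0 hx1 (hθ0 j) (hθ1 j) m hm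
    set K : ℕ := ⌈((m:ℝ)*(Real.log 2 - Real.log (θ j)) - Real.log (β-1))/Real.log β⌉₊ + 1 with hK
    have hne : kval β u x m ≠ ⊤ :=
      ne_top_of_le_ne_top (by simp : ((K:ℕ):ℕ∞) ≠ ⊤) hle
    have htn : (kval β u x m).toNat ≤ K := by
      rw [← ENat.coe_toNat hne, Nat.cast_le] at hle
      exact hle
    refine ⟨hne, ?_⟩
    have hl2 : 0 < Real.log 2 := Real.log_pos one_lt_two
    have hlθ : Real.log (θ j) < 0 := by
      rw [hlogθ j]
      have : (0:ℝ) < (j:ℝ) + 1 := by positivity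
      exact div_neg_of_neg_of_pos (by linarith) this
    have hA0 : 0 ≤ ((m:ℝ)*(Real.log 2 - Real.log (θ j)) - Real.log (β-1))/Real.log β := by
      apply div_nonneg _ hlogβ.le
      have hm' : (0:ℝ) ≤ (m:ℝ) := Nat.cast_nonneg m
      nlinarith
    have hKb : (K:ℝ) ≤ ((m:ℝ)*(Real.log 2 - Real.log (θ j)) - Real.log (β-1))/Real.log β + 2 := by
      rw [hK]
      push_cast
      have := Nat.ceil_lt_add_one hA0
      linarith
    have hsimp : ((m:ℝ)*(Real.log 2 - Real.log (θ j)) - Real.log (β-1))/Real.log β + 2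
        = (m:ℝ)*L + (m:ℝ)/((j:ℝ)+1) + C := by
      rw [hlogθ j, hL, hC]
      have hj1 : ((j:ℝ)+1) ≠ 0 := by positivity
      field_simp
      ring
    calc ((kval β u x m).toNat : ℝ) ≤ (K:ℝ) := by exact_mod_cast htn
      _ ≤ (m:ℝ)*L + (m:ℝ)/((j:ℝ)+1) + C := by rw [hsimp] at hKb; exact hKb
  have hlower : ∀ m : ℕ, kval β u x m ≠ ⊤ → (m:ℝ) * L ≤ ((kval β u x m).toNat : ℝ) := by
    intro m hne
    have h1 := le_kval (u := u) (x := x) hβ1 hβ2 m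
    rw [← ENat.coe_toNat hne, Nat.cast_le] at h1
    calc (m:ℝ) * L ≤ (⌈(m:ℝ)*L⌉₊ : ℝ) := Nat.le_ceil _
      _ ≤ ((kval β u x m).toNat : ℝ) := by exact_mod_cast h1
  constructor
  · obtain ⟨M, hM⟩ := eventually_atTop.1 (hupper 0)
    exact ⟨M, fun m hm => (hM m hm).1⟩
  · rw [Metric.tendsto_atTop]
    intro ε hε
    obtain ⟨j, hj⟩ := exists_nat_one_div_lt (show (0:ℝ) < ε/2 by linarith)
    obtain ⟨M1, hM1⟩ := eventually_atTop.1 (hupper j)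
    obtain ⟨N0, hN0⟩ := exists_nat_gt (2*C/ε)
    refine ⟨max (max M1 N0) 1, fun m hm => ?_⟩
    have hmM1 : M1 ≤ m := le_trans (le_trans (le_max_left _ _) (le_max_left _ _)) hm
    have hmN : N0 ≤ m := le_trans (le_trans (le_max_right _ _) (le_max_left _ _)) hm
    have hm1 : 1 ≤ m := le_trans (le_max_right _ _) hm
    have hm0 : (0:ℝ) < (m:ℝ) := by exact_mod_cast hm1
    obtain ⟨hne, hub⟩ := hM1 m hmM1
    have hlo := hlower m hne
    set f : ℝ := ((kval β u x m).toNat : ℝ) / (m:ℝ) with hf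
    have hf1 : L ≤ f := by
      rw [hf, le_div_iff₀ hm0]
      linarith
    have hf2 : f ≤ L + 1/((j:ℝ)+1) + C/(m:ℝ) := by
      rw [hf, div_le_iff₀ hm0]
      have e : (L + 1/((j:ℝ)+1) + C/(m:ℝ)) * (m:ℝ) = (m:ℝ)*L + (m:ℝ)/((j:ℝ)+1) + C := by
        field_simp
      rw [e]
      exact hub
    have hCm : C/(m:ℝ) < ε/2 := by
      have h1 : 2*C/ε < (m:ℝ) := lt_of_lt_of_le hN0 (by exact_mod_cast hmN)
      rw [div_lt_iff₀ hε] at h1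
      rw [div_lt_iff₀ hm0]
      clear_value C L f
      nlinarith [h1, hε, hm0]
    rw [Real.dist_eq, abs_lt]
    constructor
    · linarith
    · linarith
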